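/- Let q = (q_0, ..., q_5) ∈ ℤ^6 satisfy the Bazaikin freeness condition. Then 3 does not divide σ_3(q); in particular, the integer s defined by 8s = |σ_3(q)| satisfies s ≡ ±1 (mod 3). -/
import Mathlib


/-- The `k`-th elementary symmetric polynomial of the tuple `q`. -/
def esymm {n : ℕ} (k : ℕ) (q : Fin n → ℤ) : ℤ :=
  ∑ t ∈ Finset.univ.powersetCard k, ∏ i ∈ t, q i

/-- The Bazaikin freeness condition: the entries sum to zero, all entries are odd,
and `gcd (q a + q b, q c + q d) = 2` for all pairwise distinct indices `a b c d`. -/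
def BazaikinFree (q : Fin 6 → ℤ) : Prop :=
  (∑ i, q i) = 0 ∧ (∀ i, Odd (q i)) ∧
    ∀ a b c d : Fin 6, a ≠ b → a ≠ c → a ≠ d → b ≠ c → b ≠ d → c ≠ d →
      Int.gcd (q a + q b) (q c + q d) = 2

/-- The positive curvature condition: there is an index `i₀` such that
`q i + q j > 0` for all pairs `i < j` avoiding `i₀`, or `q i + q j < 0` for all such pairs. -/
def PosCurv (q : Fin 6 → ℤ) : Prop :=
  ∃ i₀ : Fin 6,
    (∀ i j : Fin 6, i < j → i ≠ i₀ → j ≠ i₀ → 0 < q i + q j) ∨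
    (∀ i j : Fin 6, i < j → i ≠ i₀ → j ≠ i₀ → q i + q j < 0)

set_option synthInstance.maxSize 10000 in
set_option synthInstance.maxHeartbeats 4000000 in
set_option maxRecDepth 10000 in
set_option maxHeartbeats 4000000 in
lemma bazaikin_key (a b c d e f : ZMod 3) :
    a+b+c+d+e+f = 0 → ¬(a+b=0 ∧ c+d=0) → ¬(a+b=0 ∧ c+e=0) → ¬(a+b=0 ∧ c+f=0) → ¬(a+b=0 ∧ d+e=0) → ¬(a+b=0 ∧ d+f=0) → ¬(a+b=0 ∧ e+f=0) → ¬(a+c=0 ∧ b+d=0) → ¬(a+c=0 ∧ b+e=0) → ¬(a+c=0 ∧ b+f=0) → ¬(a+c=0 ∧ d+e=0) → ¬(a+c=0 ∧ d+f=0) → ¬(a+c=0 ∧ e+f=0) → ¬(a+d=0 ∧ b+c=0) → ¬(a+d=0 ∧ b+e=0) → ¬(a+d=0 ∧ b+f=0) → ¬(a+d=0 ∧ c+e=0) → ¬(a+d=0 ∧ c+f=0) → ¬(a+d=0 ∧ e+f=0) → ¬(a+e=0 ∧ b+c=0) → ¬(a+e=0 ∧ b+d=0) → ¬(a+e=0 ∧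 b+f=0) → ¬(a+e=0 ∧ c+d=0) → ¬(a+e=0 ∧ c+f=0) → ¬(a+e=0 ∧ d+f=0) → ¬(a+f=0 ∧ b+c=0) → ¬(a+f=0 ∧ b+d=0) → ¬(a+f=0 ∧ b+e=0) → ¬(a+f=0 ∧ c+d=0) → ¬(a+f=0 ∧ c+e=0) → ¬(a+f=0 ∧ d+e=0) → ¬(b+c=0 ∧ d+e=0) → ¬(b+c=0 ∧ d+f=0) → ¬(b+c=0 ∧ e+f=0) → ¬(b+d=0 ∧ c+e=0) → ¬(b+d=0 ∧ c+f=0) → ¬(b+d=0 ∧ e+f=0) → ¬(b+e=0 ∧ c+d=0) → ¬(b+e=0 ∧ c+f=0) → ¬(b+e=0 ∧ d+f=0) → ¬(b+f=0 ∧ c+d=0) → ¬(b+f=0 ∧ c+e=0) → ¬(b+f=0 ∧ d+e=0) → ¬(c+d=0 ∧ e+f=0) → ¬(c+e=0 ∧ d+f=0) → ¬(c+f=0 ∧ d+e=0) →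
    a*b*c + a*b*d + a*b*e + a*b*f + a*c*d + a*c*e + a*c*f + a*d*e + a*d*f + a*e*f + b*c*d + b*c*e + b*c*f + b*d*e + b*d*f + b*e*f + c*d*e + c*d*f + c*e*f + d*e*f ≠ 0 := by
  revert a b c d e f; decide

lemma esymm_three_expand (q : Fin 6 → ℤ) : esymm 3 q =
    q 0*q 1*q 2 + q 0*q 1*q 3 + q 0*q 1*q 4 + q 0*q 1*q 5 + q 0*q 2*q 3 + q 0*q 2*q 4 + q 0*q 2*q 5 + q 0*q 3*q 4 + q 0*q 3*q 5 + q 0*q 4*q 5 + q 1*q 2*q 3 + q 1*q 2*q 4 + q 1*q 2*q 5 + q 1*q 3*q 4 + q 1*q 3*q 5 + q 1*q 4*q 5 + q 2*q 3*q 4 + q 2*q 3*q 5 + q 2*q 4*q 5 + q 3*q 4*q 5 := by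
  unfold esymm
  rw [show (Finset.univ.powersetCard 3 : Finset (Finset (Fin 6))) =
    {{0,1,2}, {0,1,3}, {0,1,4}, {0,1,5}, {0,2,3}, {0,2,4}, {0,2,5}, {0,3,4}, {0,3,5}, {0,4,5}, {1,2,3}, {1,2,4}, {1,2,5}, {1,3,4}, {1,3,5}, {1,4,5}, {2,3,4}, {2,3,5}, {2,4,5}, {3,4,5}} from by decide]
  simp (config := { decide := true }) [Finset.sum_insert, Finset.prod_insert,
    Finset.sum_singleton, Finset.prod_singleton]
  ring

theorem three_not_dvd_sigma3 (q : Fin 6 → ℤ) (h : BazaikinFree q) :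
    ¬ (3 ∣ esymm 3 q) := by
  obtain ⟨hsum, -, hgcd⟩ := h
  intro hdvd
  have H : ∀ a b c d : Fin 6, a ≠ b → a ≠ c → a ≠ d → b ≠ c → b ≠ d → c ≠ d →
      ¬(((q a : ZMod 3) + (q b : ZMod 3) = 0) ∧ ((q c : ZMod 3) + (q d : ZMod 3) = 0)) := by
    intro a b c d hab hac had hbc hbd hcd ⟨h1, h2⟩
    have d1 : (3 : ℤ) ∣ (q a + q b) := by
      exact_mod_cast (ZMod.intCast_zmod_eq_zero_iff_dvd (q a + q b) 3).mp (by push_cast; exact h1)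
    have d2 : (3 : ℤ) ∣ (q c + q d) := by
      exact_mod_cast (ZMod.intCast_zmod_eq_zero_iff_dvd (q c + q d) 3).mp (by push_cast; exact h2)
    have := Int.dvd_gcd d1 d2
    rw [hgcd a b c d hab hac had hbc hbd hcd] at this
    norm_num at this
  have hs : (q 0 : ZMod 3) + q 1 + q 2 + q 3 + q 4 + q 5 = 0 := by
    have := congrArg (fun z : ℤ => (z : ZMod 3)) hsum
    simpa [Fin.sum_univ_six] using this
  have he : (q 0 : ZMod 3)*(q 1)*(q 2) + (q 0)*(q 1)*(q 3) + (q 0)*(q 1)*(q 4) + (q 0)*(q 1)*(q 5) + (q 0)*(q 2)*(q 3) + (q 0)*(q 2)*(q 4) + (q 0)*(q 2)*(q 5) + (q 0)*(q 3)*(q 4) + (q 0)*(q 3)*(q 5) + (q 0)*(q 4)*(q 5) + (q 1)*(q 2)*(q 3) + (q 1)*(q 2)*(q 4) + (q 1)*(q 2)*(q 5) + (q 1)*(q 3)*(q 4) + (q 1)*(q 3)*(q 5) + (q 1)*(q 4)*(q 5) + (q 2)*(q 3)*(q 4) + (q 2)*(q 3)*(q 5) + (q 2)*(q 4)*(q 5)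 + (q 3)*(q 4)*(q 5) = 0 := by
    have h0 : ((esymm 3 q : ℤ) : ZMod 3) = 0 := by
      rw [ZMod.intCast_zmod_eq_zero_iff_dvd]; exact_mod_cast hdvd
    rw [esymm_three_expand] at h0
    push_cast at h0
    exact h0
  exact bazaikin_key (q 0 : ZMod 3) (q 1) (q 2) (q 3) (q 4) (q 5) hs
    (H 0 1 2 3 (by decide) (by decide) (by decide) (by decide) (by decide) (by decide))
    (H 0 1 2 4 (by decide) (by decide) (by decide) (by decide) (by decide) (by decide))
    (H 0 1 2 5 (by decide) (by decide) (by decide) (by decide) (by decide) (by decide))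
    (H 0 1 3 4 (by decide) (by decide) (by decide) (by decide) (by decide) (by decide))
    (H 0 1 3 5 (by decide) (by decide) (by decide) (by decide) (by decide) (by decide))
    (H 0 1 4 5 (by decide) (by decide) (by decide) (by decide) (by decide) (by decide))
    (H 0 2 1 3 (by decide) (by decide) (by decide) (by decide) (by decide) (by decide))
    (H 0 2 1 4 (by decide) (by decide) (by decide) (by decide) (by decide) (by decide))
    (H 0 2 1 5 (by decide) (by decide) (by decide) (by decide) (by decide) (by decide))
    (H 0 2 3 4 (by decide) (by decide) (by decide) (by decide) (by decide) (by decide))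
    (H 0 2 3 5 (by decide) (by decide) (by decide) (by decide) (by decide) (by decide))
    (H 0 2 4 5 (by decide) (by decide) (by decide) (by decide) (by decide) (by decide))
    (H 0 3 1 2 (by decide) (by decide) (by decide) (by decide) (by decide) (by decide))
    (H 0 3 1 4 (by decide) (by decide) (by decide) (by decide) (by decide) (by decide))
    (H 0 3 1 5 (by decide) (by decide) (by decide) (by decide) (by decide) (by decide))
    (H 0 3 2 4 (by decide) (by decide) (by decide) (by decide) (by decide) (by decide))
    (H 0 3 2 5 (by decide) (by decide) (by decide) (by decide) (by decide) (by decide))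
    (H 0 3 4 5 (by decide) (by decide) (by decide) (by decide) (by decide) (by decide))
    (H 0 4 1 2 (by decide) (by decide) (by decide) (by decide) (by decide) (by decide))
    (H 0 4 1 3 (by decide) (by decide) (by decide) (by decide) (by decide) (by decide))
    (H 0 4 1 5 (by decide) (by decide) (by decide) (by decide) (by decide) (by decide))
    (H 0 4 2 3 (by decide) (by decide) (by decide) (by decide) (by decide) (by decide))
    (H 0 4 2 5 (by decide) (by decide) (by decide) (by decide) (by decide) (by decide))
    (H 0 4 3 5 (by decide) (by decide) (by decide) (by decide) (by decide) (by decide))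
    (H 0 5 1 2 (by decide) (by decide) (by decide) (by decide) (by decide) (by decide))
    (H 0 5 1 3 (by decide) (by decide) (by decide) (by decide) (by decide) (by decide))
    (H 0 5 1 4 (by decide) (by decide) (by decide) (by decide) (by decide) (by decide))
    (H 0 5 2 3 (by decide) (by decide) (by decide) (by decide) (by decide) (by decide))
    (H 0 5 2 4 (by decide) (by decide) (by decide) (by decide) (by decide) (by decide))
    (H 0 5 3 4 (by decide) (by decide) (by decide) (by decide) (by decide) (by decide))
    (H 1 2 3 4 (by decide) (by decide) (by decide) (by decide) (by decide) (by decide))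
    (H 1 2 3 5 (by decide) (by decide) (by decide) (by decide) (by decide) (by decide))
    (H 1 2 4 5 (by decide) (by decide) (by decide) (by decide) (by decide) (by decide))
    (H 1 3 2 4 (by decide) (by decide) (by decide) (by decide) (by decide) (by decide))
    (H 1 3 2 5 (by decide) (by decide) (by decide) (by decide) (by decide) (by decide))
    (H 1 3 4 5 (by decide) (by decide) (by decide) (by decide) (by decide) (by decide))
    (H 1 4 2 3 (by decide) (by decide) (by decide) (by decide) (by decide) (by decide))
    (H 1 4 2 5 (by decide) (by decide) (by decide) (by decide) (by decide) (by decide))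
    (H 1 4 3 5 (by decide) (by decide) (by decide) (by decide) (by decide) (by decide))
    (H 1 5 2 3 (by decide) (by decide) (by decide) (by decide) (by decide) (by decide))
    (H 1 5 2 4 (by decide) (by decide) (by decide) (by decide) (by decide) (by decide))
    (H 1 5 3 4 (by decide) (by decide) (by decide) (by decide) (by decide) (by decide))
    (H 2 3 4 5 (by decide) (by decide) (by decide) (by decide) (by decide) (by decide))
    (H 2 4 3 5 (by decide) (by decide) (by decide) (by decide) (by decide) (by decide))
    (H 2 5 3 4 (by decide) (by decide) (by decide) (by decide) (by decide) (by decide))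
    he
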